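/- arXiv:1605.06153 — 4 statements merged into one kernel-verified Lean document; each statement's English description precedes it below -/
import Mathlib

section
/- Let n ≥ 1 and let B be an n×n matrix over ℤ. Then for every group automorphism ψ of ker B = {x ∈ ℤⁿ : Bx = 0}, there exist U, V ∈ GL(n,ℤ) such that UBV = B, Ux + Bℤⁿ = x + Bℤⁿ for all x ∈ ℤⁿ (i.e. U induces the identity automorphism of cok B), and ψ(x) = V⁻¹x for all x ∈ ker B. -/
open Matrix

/-- Every automorphism of `ker B` lifts to a `GL`-equivalence `(U, V) : B → B`
where `U` induces the identity on `cok B`. -/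
theorem lift_kernel_automorphism
    (n : ℕ) (hn : 1 ≤ n) (B : Matrix (Fin n) (Fin n) ℤ)
    (ψ : AddAut (LinearMap.ker B.mulVecLin)) :
    ∃ U V : Matrix.GeneralLinearGroup (Fin n) ℤ,
      (U : Matrix (Fin n) (Fin n) ℤ) * B * (V : Matrix (Fin n) (Fin n) ℤ) = B ∧
      (∀ x : Fin n → ℤ,
        (QuotientAddGroup.mk ((U : Matrix (Fin n) (Fin n) ℤ).mulVec x) :
            (Fin n → ℤ) ⧸ (LinearMap.range B.mulVecLin).toAddSubgroup)
          = QuotientAddGroup.mk x) ∧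
      (∀ x : LinearMap.ker B.mulVecLin,
        (↑(ψ x) : Fin n → ℤ)
          = ((V⁻¹ : Matrix.GeneralLinearGroup (Fin n) ℤ) : Matrix (Fin n) (Fin n) ℤ).mulVec
              (x : Fin n → ℤ)) := by
  classical
  let K : Submodule ℤ (Fin n → ℤ) := LinearMap.ker B.mulVecLin
  -- The quotient by `K` is projective, since it is isomorphic to the range of `B`,
  -- a submodule of a finite free module over a PID.
  have hproj : Module.Projective ℤ ((Fin n → ℤ) ⧸ K) :=
    Module.Projective.of_equiv (B.mulVecLin.quotKerEquivRange).symm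
  obtain ⟨s, hs⟩ := Module.projective_lifting_property K.mkQ
    (LinearMap.id : ((Fin n → ℤ) ⧸ K) →ₗ[ℤ] _) K.mkQ_surjective
  -- projection onto `K`
  have hmem : ∀ x : Fin n → ℤ, x - s (K.mkQ x) ∈ K := by
    intro x
    have hss : K.mkQ (s (K.mkQ x)) = K.mkQ x := by
      have := congrArg (fun f => f (K.mkQ x)) hs
      simpa using this
    have h1 : K.mkQ (x - s (K.mkQ x)) = 0 := by
      rw [map_sub, hss, sub_self]
    rw [Submodule.mkQ_apply] at h1
    exact (Submodule.Quotient.mk_eq_zero K).1 h1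
  set f : (Fin n → ℤ) →ₗ[ℤ] K :=
    (LinearMap.id - s ∘ₗ K.mkQ).codRestrict K hmem with hf
  have hfval : ∀ x : Fin n → ℤ, (f x : Fin n → ℤ) = x - s (K.mkQ x) := fun x => rfl
  have hfK : ∀ x : K, f x = x := by
    intro x
    apply Subtype.ext
    rw [hfval]
    have hx0 : K.mkQ (x : Fin n → ℤ) = 0 := by
      rw [Submodule.mkQ_apply]
      exact (Submodule.Quotient.mk_eq_zero K).2 x.2
    rw [hx0, map_zero, sub_zero]
  have hc : IsCompl K (LinearMap.ker f) := LinearMap.isCompl_of_proj hfK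
  set C := LinearMap.ker f with hC
  set e : (K × C) ≃ₗ[ℤ] (Fin n → ℤ) := Submodule.prodEquivOfIsCompl K C hc with he
  set ψL : K ≃ₗ[ℤ] K := (ψ : K ≃+ K).toIntLinearEquiv with hψL
  have hψLval : ∀ x : K, ψL x = ψ x := fun x => rfl
  set W : (Fin n → ℤ) ≃ₗ[ℤ] (Fin n → ℤ) :=
    e.symm.trans ((ψL.prodCongr (LinearEquiv.refl ℤ C)).trans e) with hW
  have hWapp : ∀ x : Fin n → ℤ,
      W x = e ((ψL.prodCongr (LinearEquiv.refl ℤ C)) (e.symm x)) := fun x => rfl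
  have heapp : ∀ p : K × C, e p = (p.1 : Fin n → ℤ) + (p.2 : Fin n → ℤ) := by
    intro p
    rw [he]
    exact Submodule.coe_prodEquivOfIsCompl' _ _ hc p
  -- `W` agrees with `ψ` on `K`
  have hWK : ∀ x : K, W (x : Fin n → ℤ) = (ψ x : Fin n → ℤ) := by
    intro x
    rw [hWapp]
    have hsymm : e.symm (x : Fin n → ℤ) = (x, 0) := by
      rw [he]
      exact Submodule.prodEquivOfIsCompl_symm_apply_left K C hc x
    rw [hsymm, LinearEquiv.prodCongr_apply, heapp]
    simp [hψLval]
  -- `B ∘ W = B`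
  have hBW : ∀ x : Fin n → ℤ, B.mulVecLin (W x) = B.mulVecLin x := by
    intro x
    obtain ⟨p, rfl⟩ := e.surjective x
    have h1 : W (e p) = (ψL p.1 : Fin n → ℤ) + (p.2 : Fin n → ℤ) := by
      rw [hWapp, e.symm_apply_apply, LinearEquiv.prodCongr_apply, heapp]
      rfl
    have hk1 : B.mulVecLin ((ψL p.1 : K) : Fin n → ℤ) = 0 := (ψL p.1).2
    have hk2 : B.mulVecLin ((p.1 : K) : Fin n → ℤ) = 0 := (p.1).2
    rw [h1, heapp, map_add, map_add, hk1, hk2]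
  -- the mul-equivalence between `GL n ℤ` and linear automorphisms
  set E : Matrix.GeneralLinearGroup (Fin n) ℤ ≃* ((Fin n → ℤ) ≃ₗ[ℤ] (Fin n → ℤ)) :=
    (Matrix.GeneralLinearGroup.toLin).trans
      (LinearMap.GeneralLinearGroup.generalLinearEquiv ℤ (Fin n → ℤ)) with hE
  have hEmul : ∀ (V : Matrix.GeneralLinearGroup (Fin n) ℤ) (x : Fin n → ℤ),
      (V : Matrix (Fin n) (Fin n) ℤ).mulVec x = E V x := by
    intro V x
    have h1 : ((LinearMap.GeneralLinearGroup.generalLinearEquiv ℤ (Fin n → ℤ)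
        (Matrix.GeneralLinearGroup.toLin V)) : (Fin n → ℤ) →ₗ[ℤ] (Fin n → ℤ))
        = (Matrix.GeneralLinearGroup.toLin V : (Fin n → ℤ) →ₗ[ℤ] (Fin n → ℤ)) :=
      LinearMap.GeneralLinearGroup.generalLinearEquiv_to_linearMap (R := ℤ) (M := Fin n → ℤ) _
    have h2 : ((Matrix.GeneralLinearGroup.toLin V : (Fin n → ℤ) →ₗ[ℤ] (Fin n → ℤ)))
        = Matrix.mulVecLin (V : Matrix (Fin n) (Fin n) ℤ) :=
      Matrix.GeneralLinearGroup.coe_toLin V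
    have h3 := congrArg (fun g : (Fin n → ℤ) →ₗ[ℤ] (Fin n → ℤ) => g x) (h1.trans h2)
    simp only [Matrix.mulVecLin_apply] at h3
    rw [hE, MulEquiv.trans_apply]
    simpa using h3.symm
  refine ⟨1, E.symm W.symm, ?_, ?_, ?_⟩
  · -- U B V = B
    have hEV : E (E.symm W.symm) = W.symm := E.apply_symm_apply _
    rw [Units.val_one, one_mul]
    ext i j
    have hmv : ∀ x : Fin n → ℤ,
        (B * ((E.symm W.symm : Matrix.GeneralLinearGroup (Fin n) ℤ) :
          Matrix (Fin n) (Fin n) ℤ)).mulVec x = B.mulVec x := by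
      intro x
      rw [← Matrix.mulVec_mulVec, hEmul, hEV]
      have h4 := hBW (W.symm x)
      rw [W.apply_symm_apply] at h4
      simpa [Matrix.mulVecLin_apply] using h4.symm
    have h5 := congrFun (hmv (Pi.single j 1)) i
    simpa [Matrix.mulVec_single] using h5
  · intro x
    simp [Units.val_one, Matrix.one_mulVec]
  · intro x
    have hinv : E ((E.symm W.symm)⁻¹) = W := by
      rw [map_inv, E.apply_symm_apply]
      exact W.symm_symm
    rw [hEmul, hinv, hWK]
end

section
/- Let N ≥ 1, let A be an N×N integer matrix, and let v₀, v₁ ∈ {1,…,N}. Let A′ be the (N+1)×(N+1) integer matrix defined by: A′(i,j) = A(i,j) for all i,j ≤ N with (i,j) ≠ (v₀,v₁); A′(v₀,v₁) = A(v₀,v₁) − 1; A′(v₀, N+1) = 1; A′(N+1, v₁) = 1; and all other entries of A′ involving the index N+1 are 0. Then the matrices U = I_{N+1} − E_{v₀,N+1} and V = I_{N+1} − E_{N+1,v₁} belong to SL(N+1,ℤ) and satisfy U · ((A − I_N) ⊕ (−1)) · V = A′ − I_{N+1}. -/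
open Matrix
set_option maxHeartbeats 1000000

/-- Edge expansion at an edge from `v₀` to `v₁` yields an explicit `SL`-equivalence
`(I - E_{v₀,N+1}) · ((A - I) ⊕ (-1)) · (I - E_{N+1,v₁}) = A' - I`, where the extra
index `N+1` is modelled as `Sum.inr 0 : Fin N ⊕ Fin 1`. -/
theorem edge_expansion_slEquivalence
    (N : ℕ) (hN : 1 ≤ N) (A : Matrix (Fin N) (Fin N) ℤ) (v₀ v₁ : Fin N)
    (A' : Matrix (Fin N ⊕ Fin 1) (Fin N ⊕ Fin 1) ℤ)
    (hA'₁ : ∀ i j : Fin N, (i, j) ≠ (v₀, v₁) → A' (Sum.inl i) (Sum.inl j) = A i j)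
    (hA'₂ : A' (Sum.inl v₀) (Sum.inl v₁) = A v₀ v₁ - 1)
    (hA'₃ : ∀ (i : Fin N) (k : Fin 1),
      A' (Sum.inl i) (Sum.inr k) = if i = v₀ then 1 else 0)
    (hA'₄ : ∀ (k : Fin 1) (j : Fin N),
      A' (Sum.inr k) (Sum.inl j) = if j = v₁ then 1 else 0)
    (hA'₅ : ∀ k l : Fin 1, A' (Sum.inr k) (Sum.inr l) = 0) :
    ((1 : Matrix (Fin N ⊕ Fin 1) (Fin N ⊕ Fin 1) ℤ)
        - Matrix.single (Sum.inl v₀) (Sum.inr 0) 1).det = 1 ∧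
    ((1 : Matrix (Fin N ⊕ Fin 1) (Fin N ⊕ Fin 1) ℤ)
        - Matrix.single (Sum.inr 0) (Sum.inl v₁) 1).det = 1 ∧
    ((1 : Matrix (Fin N ⊕ Fin 1) (Fin N ⊕ Fin 1) ℤ)
        - Matrix.single (Sum.inl v₀) (Sum.inr 0) 1) *
      Matrix.fromBlocks (A - 1) 0 0 (-1) *
      ((1 : Matrix (Fin N ⊕ Fin 1) (Fin N ⊕ Fin 1) ℤ)
        - Matrix.single (Sum.inr 0) (Sum.inl v₁) 1)
      = A' - 1 := by
  have h1 : ∀ (a b : Fin N ⊕ Fin 1), a ≠ b →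
      ((1 : Matrix (Fin N ⊕ Fin 1) (Fin N ⊕ Fin 1) ℤ) - Matrix.single a b 1).det = 1 := by
    intro a b hab
    have : (1 : Matrix (Fin N ⊕ Fin 1) (Fin N ⊕ Fin 1) ℤ) - Matrix.single a b 1
        = Matrix.transvection a b (-1) := by
      rw [Matrix.transvection, sub_eq_add_neg]
      congr 1
      ext i j
      simp only [Matrix.neg_apply, Matrix.single, Matrix.of_apply]
      split_ifs <;> simp
    rw [this, Matrix.det_transvection_of_ne _ _ hab]
  refine ⟨h1 _ _ (by simp), h1 _ _ (by simp), ?_⟩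
  ext i j
  have hmul : ∀ (X : Matrix (Fin N ⊕ Fin 1) (Fin N ⊕ Fin 1) ℤ) (a b i j : Fin N ⊕ Fin 1),
      ((X * ((1 : Matrix (Fin N ⊕ Fin 1) (Fin N ⊕ Fin 1) ℤ) - Matrix.single a b 1) : Matrix (Fin N ⊕ Fin 1) (Fin N ⊕ Fin 1) ℤ)) i j
        = X i j - if j = b then X i a else 0 := by
    intro X a b i j
    rw [Matrix.mul_sub, Matrix.mul_one, Matrix.sub_apply]
    congr 1
    by_cases h : j = b
    · subst h; rw [Matrix.mul_single_apply_same]; simp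
    · rw [Matrix.mul_single_apply_of_ne _ _ _ _ _ h]; simp [h]
  have hmull : ∀ (X : Matrix (Fin N ⊕ Fin 1) (Fin N ⊕ Fin 1) ℤ) (a b i j : Fin N ⊕ Fin 1),
      ((((1 : Matrix (Fin N ⊕ Fin 1) (Fin N ⊕ Fin 1) ℤ) - Matrix.single a b 1) * X : Matrix (Fin N ⊕ Fin 1) (Fin N ⊕ Fin 1) ℤ)) i j
        = X i j - if i = a then X b j else 0 := by
    intro X a b i j
    rw [Matrix.sub_mul, Matrix.one_mul, Matrix.sub_apply]
    congr 1
    by_cases h : i = a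
    · subst h; rw [Matrix.single_mul_apply_same]; simp
    · rw [Matrix.single_mul_apply_of_ne _ _ _ _ _ h]; simp [h]
  rw [hmul, hmull, hmull]
  rcases i with i | k <;> rcases j with j | l
  · simp only [Matrix.fromBlocks_apply₁₁, Matrix.fromBlocks_apply₂₁, Matrix.fromBlocks_apply₁₂,
      Matrix.fromBlocks_apply₂₂, Matrix.sub_apply, Matrix.one_apply, Matrix.zero_apply,
      Sum.inl.injEq, Sum.inr.injEq, reduceCtorEq, if_false, Matrix.neg_apply]
    by_cases hij : (i, j) = (v₀, v₁)
    · obtain ⟨hi, hj⟩ := Prod.mk.injEq .. ▸ hij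
      subst hi; subst hj
      rw [hA'₂]
      simp
      ring
    · rw [hA'₁ i j hij]
      by_cases hj : j = v₁ <;> by_cases hi : i = v₀ <;>
        simp_all [Prod.ext_iff] <;> ring
  · have : l = 0 := Subsingleton.elim _ _
    subst this
    simp [hA'₃, Matrix.one_apply]
    by_cases hi : i = v₀ <;> simp [hi]
  · have : k = 0 := Subsingleton.elim _ _
    subst this
    simp [hA'₄, Matrix.one_apply]
    by_cases hj : j = v₁ <;> simp [hj]
  · have : k = 0 := Subsingleton.elim _ _
    have : l = 0 := Subsingleton.elim _ _
    subst this
    simp [hA'₅, Matrix.one_apply, Subsingleton.elim k 0]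
end

section
/- Let N ≥ 1, let B be an N×N integer matrix, let u ∈ {1,…,N}, and let B₋₋ be the double Cuntz splice of B at u. Then there exist U, V ∈ SL(N+4,ℤ), each of which agrees with the identity matrix in every entry (i,j) for which not both i and j belong to the set {u, N+1, N+2, N+3, N+4}, such that U · (B ⊕ (−I₄)) · V = B₋₋. -/
open Matrix

/-- The double Cuntz splice `B₋₋` of an `N × N` integer matrix `B` at the vertex `u`,
with the four new indices `N+1, …, N+4` modelled as `Sum.inr 0, …, Sum.inr 3`. -/
def cuntzSpliceTwice {N : ℕ} (B : Matrix (Fin N) (Fin N) ℤ) (u : Fin N) :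
    Matrix (Fin N ⊕ Fin 4) (Fin N ⊕ Fin 4) ℤ :=
  fun i j => match i, j with
  | Sum.inl i, Sum.inl j => B i j
  | Sum.inl i, Sum.inr k => if i = u ∧ k = 0 then 1 else 0
  | Sum.inr k, Sum.inl j => if k = 0 ∧ j = u then 1 else 0
  | Sum.inr k, Sum.inr l => !![0, 1, 1, 0; 1, 0, 0, 0; 1, 0, 0, 1; 0, 0, 1, 0] k l

/-- There is an `SL`-equivalence from `B ⊕ (-I₄)` to the double Cuntz splice `B₋₋`,
supported on the rows and columns indexed by `u, N+1, …, N+4`. -/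
theorem cuntzSpliceTwice_slEquivalence
    (N : ℕ) (hN : 1 ≤ N) (B : Matrix (Fin N) (Fin N) ℤ) (u : Fin N) :
    ∃ U V : Matrix (Fin N ⊕ Fin 4) (Fin N ⊕ Fin 4) ℤ,
      U.det = 1 ∧ V.det = 1 ∧
      (∀ i j : Fin N ⊕ Fin 4,
        ¬((i = Sum.inl u ∨ ∃ k, i = Sum.inr k) ∧ (j = Sum.inl u ∨ ∃ k, j = Sum.inr k)) →
          U i j = (1 : Matrix (Fin N ⊕ Fin 4) (Fin N ⊕ Fin 4) ℤ) i j) ∧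
      (∀ i j : Fin N ⊕ Fin 4,
        ¬((i = Sum.inl u ∨ ∃ k, i = Sum.inr k) ∧ (j = Sum.inl u ∨ ∃ k, j = Sum.inr k)) →
          V i j = (1 : Matrix (Fin N ⊕ Fin 4) (Fin N ⊕ Fin 4) ℤ) i j) ∧
      U * Matrix.fromBlocks B 0 0 (-1) * V = cuntzSpliceTwice B u := by
  set A : Matrix (Fin 4) (Fin 4) ℤ :=
    !![0, -1, -1, 0; -1, 0, 0, 0; -1, 0, 0, -1; 0, 0, -1, 0] with hA
  set R : Matrix (Fin N) (Fin 4) ℤ :=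
    Matrix.of (fun i k => if i = u ∧ k = 0 then (-1 : ℤ) else 0) with hR
  set Cm : Matrix (Fin 4) (Fin N) ℤ :=
    Matrix.of (fun k j => if k = 1 ∧ j = u then (1 : ℤ) else 0) with hC
  have hRm : ∀ i k, R i k = if i = u ∧ k = 0 then (-1 : ℤ) else 0 := fun _ _ => rfl
  have hCm : ∀ k j, Cm k j = if k = 1 ∧ j = u then (1 : ℤ) else 0 := fun _ _ => rfl
  refine ⟨Matrix.fromBlocks 1 R 0 A, Matrix.fromBlocks 1 0 Cm 1, ?_, ?_, ?_, ?_, ?_⟩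
  · rw [Matrix.det_fromBlocks_zero₂₁]
    simp only [Matrix.det_one, one_mul]
    decide
  · rw [Matrix.det_fromBlocks_zero₁₂]
    simp
  · rintro (i | i) (j | j) h
    · simp [Matrix.one_apply]
    · have hi : i ≠ u := fun h' => h ⟨Or.inl (by rw [h']), Or.inr ⟨j, rfl⟩⟩
      simp [hRm, hi, Matrix.one_apply]
    · simp [Matrix.one_apply]
    · exact absurd ⟨Or.inr ⟨i, rfl⟩, Or.inr ⟨j, rfl⟩⟩ h
  · rintro (i | i) (j | j) h
    · simp [Matrix.one_apply]
    · simp [Matrix.one_apply]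
    · have hj : j ≠ u := fun h' => h ⟨Or.inr ⟨i, rfl⟩, Or.inl (by rw [h'])⟩
      simp [hCm, hj, Matrix.one_apply]
    · exact absurd ⟨Or.inr ⟨i, rfl⟩, Or.inr ⟨j, rfl⟩⟩ h
  · rw [Matrix.fromBlocks_multiply, Matrix.fromBlocks_multiply]
    simp only [Matrix.one_mul, Matrix.mul_one, Matrix.mul_zero, Matrix.zero_mul,
      add_zero, zero_add, Matrix.mul_neg, Matrix.neg_mul]
    have hRC : -(R * Cm) = 0 := by
      ext i j
      simp [Matrix.mul_apply, Fin.sum_univ_four, hRm, hCm]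
    have hAC : ∀ k j, (-(A * Cm)) k j = if k = 0 ∧ j = u then (1 : ℤ) else 0 := by
      intro k j
      rw [Matrix.neg_apply, Matrix.mul_apply, Fin.sum_univ_four]
      simp only [hCm]
      fin_cases k <;> by_cases hj : j = u <;>
        simp [hj, hA, Matrix.vecHead, Matrix.vecTail]
    have hnA : -A = !![0, 1, 1, 0; 1, 0, 0, 0; 1, 0, 0, 1; 0, 0, 1, 0] := by
      rw [hA]; decide
    rw [hRC, add_zero]
    ext (i | i) (j | j)
    · simp [cuntzSpliceTwice]
    · simp [cuntzSpliceTwice, hRm, apply_ite Neg.neg]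
    · simpa [cuntzSpliceTwice] using hAC i j
    · simp [cuntzSpliceTwice, hnA]
end

section
/- Let N ≥ 1, let B be an N×N integer matrix, let u ∈ {1,…,N}, and let B₋ be the single Cuntz splice of B at u. Then there exist U ∈ SL(N+2,ℤ) and V ∈ GL(N+2,ℤ) with det V = −1, each of which agrees with the identity matrix in every entry (i,j) for which not both i and j belong to the set {u, N+1, N+2}, such that U · (B ⊕ (−I₂)) · V = B₋. -/
open Matrix

/-- The single Cuntz splice `B₋` of `B` at `u`, with the two new indices
`N+1, N+2` modelled as `Sum.inr 0, Sum.inr 1`. -/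
def cuntzSpliceOnce {N : ℕ} (B : Matrix (Fin N) (Fin N) ℤ) (u : Fin N) :
    Matrix (Fin N ⊕ Fin 2) (Fin N ⊕ Fin 2) ℤ :=
  fun i j => match i, j with
  | Sum.inl i, Sum.inl j => B i j
  | Sum.inl i, Sum.inr k => if i = u ∧ k = 0 then 1 else 0
  | Sum.inr k, Sum.inl j => if k = 0 ∧ j = u then 1 else 0
  | Sum.inr k, Sum.inr l => !![0, 1; 1, 0] k l

/-- There is a `GL`-equivalence `(U, V)` from `B ⊕ (-I₂)` to the single Cuntz splice
`B₋` of `B` at `u`, with `det U = 1`, `det V = -1`, both supported on the rows and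
columns indexed by `u, N+1, N+2`. -/
theorem cuntzSplice_glEquivalence
    (N : ℕ) (hN : 1 ≤ N) (B : Matrix (Fin N) (Fin N) ℤ) (u : Fin N) :
    ∃ U V : Matrix (Fin N ⊕ Fin 2) (Fin N ⊕ Fin 2) ℤ,
      U.det = 1 ∧ V.det = -1 ∧
      (∀ i j : Fin N ⊕ Fin 2,
        ¬((i = Sum.inl u ∨ ∃ k, i = Sum.inr k) ∧ (j = Sum.inl u ∨ ∃ k, j = Sum.inr k)) →
          U i j = (1 : Matrix (Fin N ⊕ Fin 2) (Fin N ⊕ Fin 2) ℤ) i j) ∧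
      (∀ i j : Fin N ⊕ Fin 2,
        ¬((i = Sum.inl u ∨ ∃ k, i = Sum.inr k) ∧ (j = Sum.inl u ∨ ∃ k, j = Sum.inr k)) →
          V i j = (1 : Matrix (Fin N ⊕ Fin 2) (Fin N ⊕ Fin 2) ℤ) i j) ∧
      U * Matrix.fromBlocks B 0 0 (-1) * V = cuntzSpliceOnce B u := by
  set X : Matrix (Fin N) (Fin 2) ℤ := fun i k => if i = u ∧ k = 1 then 1 else 0 with hX
  set Y : Matrix (Fin 2) (Fin N) ℤ := fun k j => if k = 0 ∧ j = u then -1 else 0 with hY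
  set W : Matrix (Fin 2) (Fin 2) ℤ := !![0, -1; -1, 0] with hW
  refine ⟨fromBlocks 1 X 0 1, fromBlocks 1 0 Y W, ?_, ?_, ?_, ?_, ?_⟩
  · rw [det_fromBlocks_zero₂₁]
    simp
  · rw [det_fromBlocks_zero₁₂, hW]
    simp [det_fin_two_of]
  · rintro (i | i) (j | j) h
    · simp [fromBlocks, one_apply]
    · have hi : i ≠ u := by
        rintro rfl
        exact h ⟨Or.inl rfl, Or.inr ⟨j, rfl⟩⟩
      simp [fromBlocks, one_apply, hX, hi]
    · have hj : j ≠ u := by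
        rintro rfl
        exact h ⟨Or.inr ⟨i, rfl⟩, Or.inl rfl⟩
      simp [fromBlocks, one_apply]
    · exact absurd ⟨Or.inr ⟨i, rfl⟩, Or.inr ⟨j, rfl⟩⟩ h
  · rintro (i | i) (j | j) h
    · simp [fromBlocks, one_apply]
    · simp [fromBlocks, one_apply]
    · have hj : j ≠ u := by
        rintro rfl
        exact h ⟨Or.inr ⟨i, rfl⟩, Or.inl rfl⟩
      simp [fromBlocks, one_apply, hY, hj]
    · exact absurd ⟨Or.inr ⟨i, rfl⟩, Or.inr ⟨j, rfl⟩⟩ h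
  · rw [fromBlocks_multiply, fromBlocks_multiply]
    rw [show X = Matrix.of (fun i k => if i = u ∧ k = 1 then 1 else 0) from rfl,
      show Y = Matrix.of (fun k j => if k = 0 ∧ j = u then -1 else 0) from rfl]
    ext (i | i) (j | j)
    · simp [fromBlocks, cuntzSpliceOnce, mul_apply, hX, hY, Fin.sum_univ_two]
    · simp only [fromBlocks, cuntzSpliceOnce, Matrix.neg_apply, Sum.elim_inl, Sum.elim_inr,
        of_apply]
      rcases eq_or_ne i u with rfl | hi
      · fin_cases j <;> simp [hX, hW, mul_apply, Fin.sum_univ_two]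
      · fin_cases j <;> simp [hX, hW, mul_apply, Fin.sum_univ_two, hi]
    · simp only [fromBlocks, cuntzSpliceOnce, Matrix.neg_apply, Sum.elim_inl, Sum.elim_inr,
        of_apply, hY]
      split <;> simp_all
    · fin_cases i <;> fin_cases j <;>
        simp [fromBlocks, cuntzSpliceOnce, mul_apply, hW, Fin.sum_univ_two]
end
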